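/- Let V(p) = (t/2)‖p‖² + ⟨p, b⟩ + χ_{B∞}(-Aᵀp) with t ≥ 0, and let p₀ ∈ dom ∂V with descent direction d₀ = -proj_{∂V(p₀)}(0). Then for every Δ ∈ [0, Δ*] where p₀ + Δd₀ remains in dom V, we have V(p₀ + Δd₀) - V(p₀) = Δ(tΔ/2 - 1)‖d₀‖². In particular, if d₀ ≠ 0 and 0 < Δ < min(Δ*, 2/t), then d₀ is a descent direction. -/

import Mathlib

open Classical in
/-- The dual BPDN objective `V(p) = (t/2)‖p‖² + ⟨p, b⟩ + χ_{B∞}(-Aᵀp)`. -/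
noncomputable def dualBPDN (m n : ℕ) (A : Matrix (Fin m) (Fin n) ℝ) (b : Fin m → ℝ)
    (t : ℝ) (p : Fin m → ℝ) : EReal :=
  if ∀ j, |(-(A.transpose.mulVec p)) j| ≤ 1 then
    (((t / 2) * ∑ i, p i ^ 2 + ∑ i, p i * b i : ℝ) : EReal)
  else ⊤

/-- Subdifferential of the dual BPDN objective. -/
def subdiffBPDN (m n : ℕ) (A : Matrix (Fin m) (Fin n) ℝ) (b : Fin m → ℝ)
    (t : ℝ) (p : Fin m → ℝ) : Set (Fin m → ℝ) :=
  {s | ∀ q : Fin m → ℝ,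
    dualBPDN m n A b t p + ((∑ i, s i * (q i - p i) : ℝ) : EReal) ≤ dualBPDN m n A b t q}

/-- Energy identity along the minimal-selection descent direction
`d₀ = -proj_{∂V(p₀)}(0)`: for steps `Δ ∈ [0, Δ*]` staying in `dom V`,
`V(p₀ + Δ d₀) - V(p₀) = Δ(tΔ/2 - 1)‖d₀‖²`; in particular, if `d₀ ≠ 0` and
`0 < Δ ≤ Δ*` with `tΔ < 2`, then `d₀` is a descent direction. -/
theorem stmt11 (m n : ℕ) (A : Matrix (Fin m) (Fin n) ℝ) (b : Fin m → ℝ)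
    (t : ℝ) (ht : 0 ≤ t) (p₀ d₀ : Fin m → ℝ)
    (hmem : -d₀ ∈ subdiffBPDN m n A b t p₀)
    (hproj : ∀ s ∈ subdiffBPDN m n A b t p₀, ∑ i, d₀ i ^ 2 ≤ ∑ i, s i ^ 2)
    (Δstar : ℝ)
    (hdom : ∀ Δ : ℝ, 0 ≤ Δ → Δ ≤ Δstar → dualBPDN m n A b t (p₀ + Δ • d₀) ≠ ⊤) :
    (∀ Δ : ℝ, 0 ≤ Δ → Δ ≤ Δstar →
      dualBPDN m n A b t (p₀ + Δ • d₀) =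
        dualBPDN m n A b t p₀ + ((Δ * (t * Δ / 2 - 1) * ∑ i, d₀ i ^ 2 : ℝ) : EReal)) ∧
    (d₀ ≠ 0 → ∀ Δ : ℝ, 0 < Δ → Δ ≤ Δstar → t * Δ < 2 →
      dualBPDN m n A b t (p₀ + Δ • d₀) < dualBPDN m n A b t p₀) := by
  classical
  by_cases hΔs : 0 ≤ Δstar
  swap
  · constructor
    · intro Δ h0 h1; exfalso; linarith
    · intro _ Δ h0 h1 _; exfalso; linarith
  set W : (Fin m → ℝ) → ℝ := fun p => (t / 2) * ∑ i, p i ^ 2 + ∑ i, p i * b i with hW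
  -- membership in the constraint set along the segment
  have hmemC : ∀ Δ : ℝ, 0 ≤ Δ → Δ ≤ Δstar →
      ∀ j, |(-(A.transpose.mulVec (p₀ + Δ • d₀))) j| ≤ 1 := by
    intro Δ h0 h1
    by_contra h
    exact hdom Δ h0 h1 (by rw [dualBPDN, if_neg h])
  have hC0 : ∀ j, |(-(A.transpose.mulVec p₀)) j| ≤ 1 := by
    have := hmemC 0 le_rfl hΔs
    simpa using this
  have hV0 : dualBPDN m n A b t p₀ = ((W p₀ : ℝ) : EReal) := by
    rw [dualBPDN, if_pos hC0]
  -- expansion of W along a direction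
  have hWexp : ∀ (p d : Fin m → ℝ) (c : ℝ),
      W (p + c • d) = W p + c * ∑ i, (t * p i + b i) * d i + t / 2 * c ^ 2 * ∑ i, d i ^ 2 := by
    intro p d c
    simp only [hW, Pi.add_apply, Pi.smul_apply, smul_eq_mul]
    have e1 : ∑ i, (p i + c * d i) ^ 2
        = ∑ i, p i ^ 2 + (2 * c) * ∑ i, p i * d i + c ^ 2 * ∑ i, d i ^ 2 := by
      rw [Finset.mul_sum, Finset.mul_sum, ← Finset.sum_add_distrib, ← Finset.sum_add_distrib]
      exact Finset.sum_congr rfl fun i _ => by ring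
    have e2 : ∑ i, (p i + c * d i) * b i = ∑ i, p i * b i + c * ∑ i, d i * b i := by
      rw [Finset.mul_sum, ← Finset.sum_add_distrib]
      exact Finset.sum_congr rfl fun i _ => by ring
    have e3 : ∑ i, (t * p i + b i) * d i = t * ∑ i, p i * d i + ∑ i, d i * b i := by
      rw [Finset.mul_sum, ← Finset.sum_add_distrib]
      exact Finset.sum_congr rfl fun i _ => by ring
    rw [e1, e2, e3]; ring
  -- real subgradient inequality
  have hsub : ∀ q : Fin m → ℝ, (∀ j, |(-(A.transpose.mulVec q)) j| ≤ 1) →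
      W p₀ + ∑ i, (-d₀) i * (q i - p₀ i) ≤ W q := by
    intro q hq
    have h := hmem q
    rw [hV0, dualBPDN, if_pos hq, ← EReal.coe_add] at h
    exact_mod_cast h
  -- normal cone inequality
  have hnc : ∀ q : Fin m → ℝ, (∀ j, |(-(A.transpose.mulVec q)) j| ≤ 1) →
      ∑ i, (-d₀ i - (t * p₀ i + b i)) * (q i - p₀ i) ≤ 0 := by
    intro q hq
    set x := ∑ i, (-d₀ i - (t * p₀ i + b i)) * (q i - p₀ i) with hx
    set B := t / 2 * ∑ i, (q i - p₀ i) ^ 2 with hB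
    have hB0 : 0 ≤ B := by
      apply mul_nonneg (by linarith)
      exact Finset.sum_nonneg fun i _ => sq_nonneg _
    have key : ∀ s : ℝ, 0 < s → s ≤ 1 → s * x ≤ s ^ 2 * B := by
      intro s hs0 hs1
      have hqs : ∀ j, |(-(A.transpose.mulVec (p₀ + s • (q - p₀)))) j| ≤ 1 := by
        intro j
        have hrw : (-(A.transpose.mulVec (p₀ + s • (q - p₀)))) j
            = (1 - s) * (-(A.transpose.mulVec p₀)) j + s * (-(A.transpose.mulVec q)) j := by
          simp only [Matrix.mulVec_add, Matrix.mulVec_smul, Matrix.mulVec_sub, Pi.neg_apply,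
            Pi.add_apply, Pi.smul_apply, Pi.sub_apply, smul_eq_mul]
          ring
        rw [hrw]
        calc |(1 - s) * (-(A.transpose.mulVec p₀)) j + s * (-(A.transpose.mulVec q)) j|
            ≤ |(1 - s) * (-(A.transpose.mulVec p₀)) j| + |s * (-(A.transpose.mulVec q)) j| :=
              abs_add_le _ _
          _ = (1 - s) * |(-(A.transpose.mulVec p₀)) j| + s * |(-(A.transpose.mulVec q)) j| := by
              rw [abs_mul, abs_mul, abs_of_nonneg (by linarith : (0:ℝ) ≤ 1 - s),
                abs_of_nonneg hs0.le]
          _ ≤ (1 - s) * 1 + s * 1 := by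
              apply add_le_add
              · exact mul_le_mul_of_nonneg_left (hC0 j) (by linarith)
              · exact mul_le_mul_of_nonneg_left (hq j) hs0.le
          _ = 1 := by ring
      have h1 := hsub _ hqs
      have h2 := hWexp p₀ (q - p₀) s
      have h3 : ∑ i, (-d₀) i * ((p₀ + s • (q - p₀)) i - p₀ i)
          = s * ∑ i, (-d₀) i * (q i - p₀ i) := by
        rw [Finset.mul_sum]
        exact Finset.sum_congr rfl fun i _ => by
          simp only [Pi.add_apply, Pi.smul_apply, Pi.sub_apply, smul_eq_mul, Pi.neg_apply]
          ring
      have h4 : x = (∑ i, (-d₀) i * (q i - p₀ i)) - ∑ i, (t * p₀ i + b i) * (q i - p₀ i) := by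
        rw [hx, ← Finset.sum_sub_distrib]
        exact Finset.sum_congr rfl fun i _ => by simp only [Pi.neg_apply]; ring
      have h5 : ∑ i, (t * p₀ i + b i) * ((q - p₀) i) = ∑ i, (t * p₀ i + b i) * (q i - p₀ i) := by
        exact Finset.sum_congr rfl fun i _ => by simp only [Pi.sub_apply]
      have h6 : ∑ i, ((q - p₀) i) ^ 2 = ∑ i, (q i - p₀ i) ^ 2 := by
        exact Finset.sum_congr rfl fun i _ => by simp only [Pi.sub_apply]
      rw [h2, h5, h6] at h1
      rw [h3] at h1
      rw [h4, hB]
      nlinarith [h1]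
    by_contra hxpos
    push_neg at hxpos
    rcases eq_or_lt_of_le hB0 with hBz | hBp
    · have := key 1 one_pos le_rfl
      nlinarith
    · have hs0 : 0 < min 1 (x / (2 * B)) := lt_min one_pos (by positivity)
      have hs1 : min 1 (x / (2 * B)) ≤ 1 := min_le_left _ _
      have hk := key _ hs0 hs1
      have h7 : min 1 (x / (2 * B)) ≤ x / (2 * B) := min_le_right _ _
      have h8 : (x / (2 * B)) * B = x / 2 := by field_simp
      have h9 : min 1 (x / (2 * B)) * B ≤ x / 2 := by
        calc min 1 (x / (2 * B)) * B ≤ (x / (2 * B)) * B :=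
              mul_le_mul_of_nonneg_right h7 hBp.le
          _ = x / 2 := h8
      nlinarith [mul_pos hs0 hxpos, mul_le_mul_of_nonneg_left h9 hs0.le, hk]
  -- the family of subgradients g + μ ν
  have hmu : ∀ μ : ℝ, 0 ≤ μ →
      ∑ i, d₀ i ^ 2 ≤ ∑ i, ((t * p₀ i + b i) + μ * (-d₀ i - (t * p₀ i + b i))) ^ 2 := by
    intro μ hμ
    have hs : (fun i => (t * p₀ i + b i) + μ * (-d₀ i - (t * p₀ i + b i)))
        ∈ subdiffBPDN m n A b t p₀ := by
      intro q
      by_cases hq : ∀ j, |(-(A.transpose.mulVec q)) j| ≤ 1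
      · rw [hV0, dualBPDN, if_pos hq, ← EReal.coe_add, EReal.coe_le_coe_iff]
        have h1 := hnc q hq
        have h2 := hWexp p₀ (q - p₀) 1
        have h3 : p₀ + (1:ℝ) • (q - p₀) = q := by
          funext i; simp
        rw [h3] at h2
        have h5 : ∑ i, (t * p₀ i + b i) * ((q - p₀) i)
            = ∑ i, (t * p₀ i + b i) * (q i - p₀ i) :=
          Finset.sum_congr rfl fun i _ => by simp only [Pi.sub_apply]
        have h6 : ∑ i, ((q - p₀) i) ^ 2 = ∑ i, (q i - p₀ i) ^ 2 :=
          Finset.sum_congr rfl fun i _ => by simp only [Pi.sub_apply]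
        rw [h5, h6] at h2
        have h7 : ∑ i, ((t * p₀ i + b i) + μ * (-d₀ i - (t * p₀ i + b i))) * (q i - p₀ i)
            = (∑ i, (t * p₀ i + b i) * (q i - p₀ i))
              + μ * ∑ i, (-d₀ i - (t * p₀ i + b i)) * (q i - p₀ i) := by
          rw [Finset.mul_sum, ← Finset.sum_add_distrib]
          exact Finset.sum_congr rfl fun i _ => by ring
        have h8 : 0 ≤ t / 2 * 1 ^ 2 * ∑ i, (q i - p₀ i) ^ 2 := by
          apply mul_nonneg (by positivity)
          exact Finset.sum_nonneg fun i _ => sq_nonneg _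
        rw [h7]
        have hWq : (t / 2) * ∑ i, q i ^ 2 + ∑ i, q i * b i = W q := rfl
        rw [hWq]
        have h9 : μ * ∑ i, (-d₀ i - (t * p₀ i + b i)) * (q i - p₀ i) ≤ 0 := by
          have := mul_le_mul_of_nonneg_left h1 hμ
          simpa using this
        rw [h2]
        linarith [h8, h9]
      · have htop : dualBPDN m n A b t q = ⊤ := by rw [dualBPDN, if_neg hq]
        rw [htop]
        exact le_top
    have := hproj _ hs
    simpa using this
  -- quadratic analysis: a + c = 0
  set g : Fin m → ℝ := fun i => t * p₀ i + b i with hg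
  set ν : Fin m → ℝ := fun i => -d₀ i - g i with hν
  set a : ℝ := ∑ i, ν i ^ 2 with ha
  set c : ℝ := ∑ i, g i * ν i with hc
  have ha0 : 0 ≤ a := Finset.sum_nonneg fun i _ => sq_nonneg _
  have hQ : ∀ μ : ℝ, ∑ i, (g i + μ * ν i) ^ 2
      = ∑ i, g i ^ 2 + 2 * μ * c + μ ^ 2 * a := by
    intro μ
    rw [hc, ha, Finset.mul_sum, Finset.mul_sum, ← Finset.sum_add_distrib,
      ← Finset.sum_add_distrib]
    exact Finset.sum_congr rfl fun i _ => by ring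
  have hd2 : ∑ i, d₀ i ^ 2 = ∑ i, (g i + 1 * ν i) ^ 2 :=
    Finset.sum_congr rfl fun i _ => by simp only [hν]; ring
  have hmu' : ∀ μ : ℝ, 0 ≤ μ → 2 * c + a ≤ 2 * μ * c + μ ^ 2 * a := by
    intro μ hμ
    have := hmu μ hμ
    rw [hd2, hQ 1, hQ μ] at this
    linarith
  have habs : ∀ ε : ℝ, 0 < ε → ε ≤ 1 → |2 * c + 2 * a| ≤ ε * a := by
    intro ε h0 h1
    have h2 := hmu' (1 + ε) (by linarith)
    have h3 := hmu' (1 - ε) (by linarith)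
    rw [abs_le]
    constructor <;> nlinarith
  have hac : a + c = 0 := by
    by_contra hne
    have hx : 0 < |2 * c + 2 * a| := abs_pos.mpr (by intro h; apply hne; linarith)
    rcases eq_or_lt_of_le ha0 with h | h
    · have h1 := habs 1 one_pos le_rfl
      rw [← h] at h1
      simp at h1
      exact hne (by have hc0 : c = 0 := abs_eq_zero.mp (by linarith [abs_nonneg c]); linarith)
    · have hε0 : 0 < min 1 (|2 * c + 2 * a| / (2 * a)) := lt_min one_pos (by positivity)
      have hε1 : min 1 (|2 * c + 2 * a| / (2 * a)) ≤ 1 := min_le_left _ _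
      have h1 := habs _ hε0 hε1
      have h2 : min 1 (|2 * c + 2 * a| / (2 * a)) * a ≤ (|2 * c + 2 * a| / (2 * a)) * a :=
        mul_le_mul_of_nonneg_right (min_le_right _ _) h.le
      have h3 : (|2 * c + 2 * a| / (2 * a)) * a = |2 * c + 2 * a| / 2 := by
        field_simp
      linarith
  -- key identity
  have hK : ∑ i, d₀ i ^ 2 + ∑ i, g i * d₀ i = 0 := by
    have e : ∑ i, (d₀ i ^ 2 + g i * d₀ i) = a + c := by
      rw [ha, hc, ← Finset.sum_add_distrib]
      exact Finset.sum_congr rfl fun i _ => by simp only [hν]; ring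
    rw [← Finset.sum_add_distrib, e, hac]
  have main : ∀ Δ : ℝ, 0 ≤ Δ → Δ ≤ Δstar →
      dualBPDN m n A b t (p₀ + Δ • d₀) =
        dualBPDN m n A b t p₀ + ((Δ * (t * Δ / 2 - 1) * ∑ i, d₀ i ^ 2 : ℝ) : EReal) := by
    intro Δ h0 h1
    have hCq := hmemC Δ h0 h1
    rw [dualBPDN, if_pos hCq, hV0, ← EReal.coe_add, EReal.coe_eq_coe_iff]
    have h2 := hWexp p₀ d₀ Δ
    have h3 : W (p₀ + Δ • d₀)
        = (t / 2) * ∑ i, (p₀ + Δ • d₀) i ^ 2 + ∑ i, (p₀ + Δ • d₀) i * b i := rfl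
    rw [← h3, h2]
    have hgd : ∑ i, g i * d₀ i = ∑ i, (t * p₀ i + b i) * d₀ i := rfl
    rw [← hgd]
    have : ∑ i, g i * d₀ i = -∑ i, d₀ i ^ 2 := by linarith
    rw [this]; ring
  refine ⟨main, ?_⟩
  intro hd Δ h0 h1 h2
  have hS : 0 < ∑ i, d₀ i ^ 2 := by
    have : ∃ i, d₀ i ≠ 0 := by
      by_contra h
      push_neg at h
      exact hd (funext h)
    obtain ⟨i, hi⟩ := this
    exact Finset.sum_pos' (fun j _ => sq_nonneg _) ⟨i, Finset.mem_univ i, by positivity⟩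
  rw [main Δ h0.le h1, hV0, ← EReal.coe_add]
  rw [EReal.coe_lt_coe_iff]
  nlinarith [mul_neg_of_pos_of_neg (mul_pos h0 hS) (show t * Δ / 2 - 1 < 0 by linarith)]
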